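/- Let n ≥ 3, let U be the n×n Fourier matrix with entries u_{j,k} = exp(2πi·j·k/n)/√n, and let a_{i,j} = 1/√2 for all i ≠ j, with associated orthonormal LDOI basis vectors φ_{i,j}. Define P_{i,i} = 0 for all i, and for i ≠ j define P_{i,j} = (1/2)·(E_{(i,j),(i,j)} + E_{(j,i),(j,i)}) + (s_{i,j}/(2n−2))·(E_{(i,j),(j,i)} + E_{(j,i),(i,j)}) + (1/(2n−2))·(E_{(i,i),(i,i)} + E_{(j,j),(j,j)}), where s_{i,j} = 1 if i < j and s_{i,j} = −1 if i > j, and E_{r,c} is the matrix unit with a 1 in row r and column c. Then (P_{i,j})_{1≤i,j≤n} is a PPT POVM, ⟨φ_{i,j}, P_{i,j} φ_{i,j}⟩ = n/(2n−2) for all i ≠ j, and its success probability for the uniform ensemble equals exactly 1/2; moreover, every PPT POVM for this ensemble has success probability at most 1/2. -/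

import Mathlib

open Matrix Kronecker BigOperators
open scoped ComplexOrder

/-- The vectors of the orthonormal LDOI basis associated to `(U, A)`:
`φ_{i,i} = ∑_k u_{i,k} e_k ⊗ e_k`;
for `i < j`, `φ_{i,j} = a_{i,j} e_i ⊗ e_j + conj(a_{j,i}) e_j ⊗ e_i` and
`φ_{j,i} = a_{j,i} e_i ⊗ e_j − conj(a_{i,j}) e_j ⊗ e_i`. -/
noncomputable def ldoiBasis {n : ℕ} (U A : Matrix (Fin n) (Fin n) ℂ) (i j : Fin n) :
    (Fin n × Fin n) → ℂ :=
  if i = j then (fun p => if p.1 = p.2 then U i p.1 else 0)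
  else if i < j then
    (fun p => if p = (i, j) then A i j else if p = (j, i) then (starRingEnd ℂ) (A j i) else 0)
  else
    (fun p => if p = (j, i) then A i j else if p = (i, j) then -(starRingEnd ℂ) (A j i) else 0)

/-- The partial transpose on the first factor: `T₁(M)_{(i,k),(j,l)} = M_{(j,k),(i,l)}`. -/
def ptranspose {n : ℕ} (M : Matrix (Fin n × Fin n) (Fin n × Fin n) ℂ) :
    Matrix (Fin n × Fin n) (Fin n × Fin n) ℂ :=
  Matrix.of fun p q => M (q.1, p.2) (p.1, q.2)

/-- The `n × n` Fourier matrix, `u_{j,k} = exp(2πi·j·k/n)/√n`. -/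
noncomputable def fourierU (n : ℕ) : Matrix (Fin n) (Fin n) ℂ :=
  fun j k => Complex.exp (2 * (Real.pi : ℂ) * Complex.I * ((j : ℕ) : ℂ) * ((k : ℕ) : ℂ) / n) /
    (Real.sqrt n : ℂ)

/-- The matrix `A` with all entries `1/√2`. -/
noncomputable def halfA (n : ℕ) : Matrix (Fin n) (Fin n) ℂ :=
  fun _ _ => ((Real.sqrt 2 : ℝ) : ℂ)⁻¹

/-- The PPT measurement operators from Example 5 (`mixed Bell basis`): `P_{i,i} = 0` and, for
`i ≠ j`,
`P_{i,j} = (1/2)(E_{(i,j),(i,j)} + E_{(j,i),(j,i)}) + (s_{i,j}/(2n−2))(E_{(i,j),(j,i)} +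
E_{(j,i),(i,j)}) + (1/(2n−2))(E_{(i,i),(i,i)} + E_{(j,j),(j,j)})`
with `s_{i,j} = 1` if `i < j` and `−1` if `i > j`. -/
noncomputable def fourierP (n : ℕ) (i j : Fin n) :
    Matrix (Fin n × Fin n) (Fin n × Fin n) ℂ :=
  if i = j then 0 else
    (1 / 2 : ℂ) • (Matrix.single (i, j) (i, j) 1 +
        Matrix.single (j, i) (j, i) 1) +
      (((if i < j then 1 else -1) : ℂ) / (2 * (n : ℂ) - 2)) •
        (Matrix.single (i, j) (j, i) 1 + Matrix.single (j, i) (i, j) 1) +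
      (1 / (2 * (n : ℂ) - 2)) • (Matrix.single (i, i) (i, i) 1 +
        Matrix.single (j, j) (j, j) 1)

set_option linter.unusedSectionVars false
set_option maxHeartbeats 1000000

section Helpers
variable {ι : Type*} [Fintype ι] [DecidableEq ι]
variable {n : ℕ}

variable {n : ℕ}

lemma dot_std (x : (Fin n × Fin n) → ℂ) (p q : Fin n × Fin n) :
    star x ⬝ᵥ (Matrix.single p q (1:ℂ) *ᵥ x) = (starRingEnd ℂ) (x p) * x q := by
  simp [single_mulVec, dotProduct, Function.update_apply, Pi.star_apply]

lemma std_conjT (p q : Fin n × Fin n) :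
    (Matrix.single p q (1:ℂ))ᴴ = Matrix.single q p 1 := by
  ext a b
  simp [Matrix.single, conjTranspose_apply, and_comm]

lemma fourierP_quadform {i j : Fin n} (h : i ≠ j) (x : (Fin n × Fin n) → ℂ) :
    star x ⬝ᵥ (fourierP n i j *ᵥ x) =
      (1/2 : ℂ) * ((starRingEnd ℂ) (x (i,j)) * x (i,j) + (starRingEnd ℂ) (x (j,i)) * x (j,i))
      + (((if i < j then 1 else -1):ℂ)/(2*(n:ℂ)-2)) *
          ((starRingEnd ℂ) (x (i,j)) * x (j,i) + (starRingEnd ℂ) (x (j,i)) * x (i,j))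
      + (1/(2*(n:ℂ)-2)) *
          ((starRingEnd ℂ) (x (i,i)) * x (i,i) + (starRingEnd ℂ) (x (j,j)) * x (j,j)) := by
  simp only [fourierP, if_neg h, add_mulVec, smul_mulVec, dotProduct_add,
    dotProduct_smul, dot_std, smul_eq_mul]

variable {ι : Type*} [Fintype ι] [DecidableEq ι]

lemma star_single (p : ι) (c : ℂ) :
    star (Pi.single p c : ι → ℂ) = Pi.single p (star c) := by
  funext r
  simp [Pi.single_apply, apply_ite star]

lemma quad_single (M : Matrix ι ι ℂ) (p : ι) (c : ℂ) :
    star (Pi.single p c) ⬝ᵥ (M *ᵥ Pi.single p c) = star c * (M p p * c) := by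
  rw [star_single, mulVec_single, single_dotProduct]
  simp only [Pi.smul_apply, col_apply, op_smul_eq_mul]

lemma quad_two (M : Matrix ι ι ℂ) (p q : ι) (c d : ℂ) :
    star (Pi.single p c + Pi.single q d) ⬝ᵥ (M *ᵥ (Pi.single p c + Pi.single q d)) =
      star c * (M p p * c) + star c * (M p q * d) + star d * (M q p * c)
        + star d * (M q q * d) := by
  rw [star_add, mulVec_add, star_single, star_single, mulVec_single, mulVec_single,
    add_dotProduct, dotProduct_add, dotProduct_add, single_dotProduct, single_dotProduct,
    single_dotProduct, single_dotProduct]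
  simp only [Pi.smul_apply, col_apply, op_smul_eq_mul]
  ring

lemma psd_diag {M : Matrix ι ι ℂ} (hM : M.PosSemidef) (p : ι) :
    0 ≤ (M p p).re ∧ (M p p).im = 0 := by
  have h := hM.dotProduct_mulVec_nonneg (Pi.single p 1)
  rw [quad_single] at h
  simp only [star_one, one_mul, mul_one] at h
  rw [Complex.nonneg_iff] at h
  exact ⟨h.1, h.2.symm⟩

lemma psd_offdiag {M : Matrix ι ι ℂ} (hM : M.PosSemidef) {p q : ι} (hpq : p ≠ q) :
    2 * ‖M p q‖ ≤ (M p p).re + (M q q).re := by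
  rcases eq_or_ne (M p q) 0 with h0 | h0
  · simp only [h0, norm_zero, mul_zero]
    exact add_nonneg (psd_diag hM p).1 (psd_diag hM q).1
  · set c : ℂ := -(‖M p q‖ : ℂ) / (M p q) with hc
    have habs : ‖c‖ = 1 := by
      simp [hc, map_div₀, h0]
    have hcc : star c * c = 1 := by
      have : (starRingEnd ℂ) c * c = ((Complex.normSq c : ℝ) : ℂ) :=
        (Complex.normSq_eq_conj_mul_self).symm
      rw [Complex.star_def, this, Complex.normSq_eq_norm_sq, habs]
      norm_num
    have hherm : M q p = star (M p q) := by
      rw [← hM.isHermitian.apply q p]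
    have hcM : c * M p q = -(‖M p q‖ : ℂ) := by
      rw [hc, div_mul_cancel₀ _ h0]
    have hq := hM.dotProduct_mulVec_nonneg (Pi.single p 1 + Pi.single q c)
    rw [quad_two] at hq
    have key : star (1:ℂ) * (M p p * 1) + star (1:ℂ) * (M p q * c) + star c * (M q p * 1)
        + star c * (M q q * c)
        = M p p + M q q - 2 * (‖M p q‖ : ℂ) := by
      rw [hherm]
      simp only [star_one, one_mul, mul_one]
      have h2 : M p q * c = -(‖M p q‖ : ℂ) := by rw [mul_comm]; exact hcM
      have h3 : star c * star (M p q) = star (c * M p q) := (star_mul' c (M p q)).symm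
      rw [h2, h3, hcM]
      have h4 : star c * (M q q * c) = (star c * c) * M q q := by ring
      rw [h4, hcc]
      have : star (-(‖M p q‖ : ℂ)) = -(‖M p q‖ : ℂ) := by
        simp [Complex.star_def]
      rw [this]
      ring
    rw [key, Complex.nonneg_iff] at hq
    have h1 := hq.1
    simp only [Complex.sub_re, Complex.add_re, Complex.mul_re, Complex.ofReal_re,
      Complex.ofReal_im, Complex.re_ofNat, Complex.im_ofNat] at h1
    linarith

lemma key_ineq (a b : ℝ) (hb : |b| ≤ a) (u v : ℂ) :
    0 ≤ (a:ℂ) * ((starRingEnd ℂ) u * u + (starRingEnd ℂ) v * v)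
      + (b:ℂ) * ((starRingEnd ℂ) u * v + (starRingEnd ℂ) v * u) := by
  rw [Complex.nonneg_iff]
  constructor
  · simp only [Complex.add_re, Complex.mul_re, Complex.mul_im, Complex.conj_re, Complex.conj_im,
      Complex.ofReal_re, Complex.ofReal_im, Complex.add_im]
    have := abs_le.mp hb
    nlinarith [sq_nonneg (u.re - v.re), sq_nonneg (u.re + v.re), sq_nonneg (u.im - v.im),
      sq_nonneg (u.im + v.im)]
  · simp only [Complex.add_im, Complex.mul_re, Complex.mul_im, Complex.conj_re, Complex.conj_im,
      Complex.ofReal_re, Complex.ofReal_im, Complex.add_re]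
    ring

section FP
variable {n : ℕ}
open Matrix

lemma rcast (hn : 3 ≤ n) : (1 : ℂ) / (2 * (n : ℂ) - 2) = ((1 / (2 * (n:ℝ) - 2) : ℝ) : ℂ) := by
  push_cast
  ring

lemma rpos (hn : 3 ≤ n) : (0:ℝ) < 2 * (n:ℝ) - 2 := by
  have : (3:ℝ) ≤ (n:ℝ) := by exact_mod_cast hn
  linarith

lemma rsmall (hn : 3 ≤ n) : |1 / (2 * (n:ℝ) - 2)| ≤ 1/2 := by
  have h := rpos hn
  rw [abs_of_nonneg (by positivity)]
  rw [div_le_div_iff₀ h (by norm_num)]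
  have : (3:ℝ) ≤ (n:ℝ) := by exact_mod_cast hn
  linarith

lemma fourierP_herm (i j : Fin n) : (fourierP n i j).IsHermitian := by
  rcases eq_or_ne i j with rfl | h
  · simp [fourierP, Matrix.isHermitian_zero]
  · unfold Matrix.IsHermitian
    simp only [fourierP, if_neg h, conjTranspose_add, conjTranspose_smul, std_conjT]
    have s1 : star ((1:ℂ)/2) = (1:ℂ)/2 := by simp
    have s2 : star (((if i < j then 1 else -1):ℂ) / (2 * (n : ℂ) - 2))
        = ((if i < j then 1 else -1):ℂ) / (2 * (n : ℂ) - 2) := by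
      split_ifs <;> simp [star_div₀, ← Complex.ofReal_ofNat]
    have s3 : star ((1:ℂ) / (2 * (n : ℂ) - 2)) = (1:ℂ) / (2 * (n : ℂ) - 2) := by
      simp [star_div₀, ← Complex.ofReal_ofNat]
    rw [s1, s2, s3]
    ring_nf
    module

lemma fourierP_psd (hn : 3 ≤ n) (i j : Fin n) : (fourierP n i j).PosSemidef := by
  rcases eq_or_ne i j with rfl | h
  · simp only [fourierP, if_pos rfl]
    exact Matrix.PosSemidef.zero
  · refine .of_dotProduct_mulVec_nonneg (fourierP_herm i j) fun x => ?_
    rw [fourierP_quadform h]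
    have hc : ((if i < j then 1 else -1):ℂ) / (2 * (n : ℂ) - 2)
        = (((if i < j then 1 else -1) / (2 * (n:ℝ) - 2) : ℝ) : ℂ) := by
      split_ifs <;> (push_cast; ring)
    rw [rcast hn, hc]
    have hb : |(if i < j then (1:ℝ) else -1) / (2 * (n:ℝ) - 2)| ≤ 1/2 := by
      split_ifs
      · simpa using rsmall hn
      · rw [neg_div, abs_neg]
        simpa using rsmall hn
    have k1 := key_ineq (1/2) ((if i < j then (1:ℝ) else -1) / (2 * (n:ℝ) - 2)) hb
      (x (i,j)) (x (j,i))
    rw [show ((1/2:ℝ):ℂ) = (1/2:ℂ) by norm_num] at k1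
    have hr0 : |(0:ℝ)| ≤ 1 / (2 * (n:ℝ) - 2) := by
      rw [abs_zero]
      exact le_of_lt (div_pos one_pos (rpos hn))
    have k2 := key_ineq (1 / (2 * (n:ℝ) - 2)) 0 hr0 (x (i,i)) (x (j,j))
    rw [Complex.ofReal_zero, zero_mul, add_zero] at k2
    exact add_nonneg k1 k2
end FP

section PT
variable {n : ℕ}

lemma ptranspose_apply (M : Matrix (Fin n × Fin n) (Fin n × Fin n) ℂ) (p q : Fin n × Fin n) :
    ptranspose M p q = M (q.1, p.2) (p.1, q.2) := rfl

lemma ptranspose_add (A B : Matrix (Fin n × Fin n) (Fin n × Fin n) ℂ) :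
    ptranspose (A + B) = ptranspose A + ptranspose B := rfl

lemma ptranspose_smul (c : ℂ) (A : Matrix (Fin n × Fin n) (Fin n × Fin n) ℂ) :
    ptranspose (c • A) = c • ptranspose A := rfl

lemma ptranspose_std (a b c d : Fin n) (v : ℂ) :
    ptranspose (Matrix.single ((a,b) : Fin n × Fin n) ((c,d) : Fin n × Fin n) v)
      = Matrix.single ((c,b) : Fin n × Fin n) ((a,d) : Fin n × Fin n) v := by
  ext p q
  simp only [ptranspose_apply, Matrix.single, of_apply, Prod.ext_iff]
  exact if_congr (by tauto) rfl rfl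

lemma ptranspose_conjT (M : Matrix (Fin n × Fin n) (Fin n × Fin n) ℂ) :
    (ptranspose M)ᴴ = ptranspose Mᴴ := by
  ext p q
  simp [ptranspose_apply, conjTranspose_apply]

lemma ptranspose_isHermitian {M : Matrix (Fin n × Fin n) (Fin n × Fin n) ℂ}
    (hM : M.IsHermitian) : (ptranspose M).IsHermitian := by
  unfold Matrix.IsHermitian
  rw [ptranspose_conjT, hM.eq]

lemma ptP_eq {i j : Fin n} (h : i ≠ j) : ptranspose (fourierP n i j) =
    (1 / 2 : ℂ) • (Matrix.single ((i,j) : Fin n × Fin n) (i,j) (1:ℂ) +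
        Matrix.single ((j,i) : Fin n × Fin n) (j,i) (1:ℂ)) +
      (((if i < j then 1 else -1) : ℂ) / (2 * (n : ℂ) - 2)) •
        (Matrix.single ((j,j) : Fin n × Fin n) (i,i) 1 +
          Matrix.single ((i,i) : Fin n × Fin n) (j,j) 1) +
      (1 / (2 * (n : ℂ) - 2)) • (Matrix.single ((i,i) : Fin n × Fin n) (i,i) (1:ℂ) +
        Matrix.single ((j,j) : Fin n × Fin n) (j,j) (1:ℂ)) := by
  rw [fourierP, if_neg h, ptranspose_add, ptranspose_add, ptranspose_smul, ptranspose_smul,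
    ptranspose_smul, ptranspose_add, ptranspose_add, ptranspose_add,
    ptranspose_std, ptranspose_std, ptranspose_std, ptranspose_std, ptranspose_std,
    ptranspose_std]

lemma ptP_quadform {i j : Fin n} (h : i ≠ j) (x : (Fin n × Fin n) → ℂ) :
    star x ⬝ᵥ (ptranspose (fourierP n i j) *ᵥ x) =
      (1/2 : ℂ) * ((starRingEnd ℂ) (x (i,j)) * x (i,j) + (starRingEnd ℂ) (x (j,i)) * x (j,i))
      + (((if i < j then 1 else -1):ℂ)/(2*(n:ℂ)-2)) *
          ((starRingEnd ℂ) (x (j,j)) * x (i,i) + (starRingEnd ℂ) (x (i,i)) * x (j,j))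
      + (1/(2*(n:ℂ)-2)) *
          ((starRingEnd ℂ) (x (i,i)) * x (i,i) + (starRingEnd ℂ) (x (j,j)) * x (j,j)) := by
  rw [ptP_eq h]
  simp only [add_mulVec, smul_mulVec, dotProduct_add, dotProduct_smul, dot_std,
    smul_eq_mul]

lemma ptP_psd (hn : 3 ≤ n) (i j : Fin n) : (ptranspose (fourierP n i j)).PosSemidef := by
  rcases eq_or_ne i j with rfl | h
  · rw [show fourierP n i i = 0 from if_pos rfl]
    have : ptranspose (0 : Matrix (Fin n × Fin n) (Fin n × Fin n) ℂ) = 0 := rfl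
    rw [this]
    exact Matrix.PosSemidef.zero
  · refine .of_dotProduct_mulVec_nonneg (ptranspose_isHermitian (fourierP_herm i j)) fun x => ?_
    rw [ptP_quadform h]
    have hc : ((if i < j then 1 else -1):ℂ) / (2 * (n : ℂ) - 2)
        = (((if i < j then 1 else -1) / (2 * (n:ℝ) - 2) : ℝ) : ℂ) := by
      split_ifs <;> (push_cast; ring)
    rw [rcast hn, hc]
    have hb : |(if i < j then (1:ℝ) else -1) / (2 * (n:ℝ) - 2)| ≤ 1 / (2 * (n:ℝ) - 2) := by
      split_ifs
      · rw [abs_of_nonneg (le_of_lt (div_pos one_pos (rpos hn)))]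
      · rw [neg_div, abs_neg, abs_of_nonneg (le_of_lt (div_pos one_pos (rpos hn)))]
    have k2 := key_ineq (1 / (2 * (n:ℝ) - 2))
      ((if i < j then (1:ℝ) else -1) / (2 * (n:ℝ) - 2)) hb (x (j,j)) (x (i,i))
    have h12 : |(0:ℝ)| ≤ (1/2 : ℝ) := by norm_num
    have k1 := key_ineq (1/2) 0 h12 (x (i,j)) (x (j,i))
    rw [Complex.ofReal_zero, zero_mul, add_zero,
      show ((1/2:ℝ):ℂ) = (1/2:ℂ) by norm_num] at k1
    have comm1 : (starRingEnd ℂ) (x (j,j)) * x (i,i) + (starRingEnd ℂ) (x (i,i)) * x (j,j)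
        = (starRingEnd ℂ) (x (i,i)) * x (j,j) + (starRingEnd ℂ) (x (j,j)) * x (i,i) := by ring
    have comm2 : (starRingEnd ℂ) (x (j,j)) * x (j,j) + (starRingEnd ℂ) (x (i,i)) * x (i,i)
        = (starRingEnd ℂ) (x (i,i)) * x (i,i) + (starRingEnd ℂ) (x (j,j)) * x (j,j) := by ring
    rw [comm2] at k2
    calc (0:ℂ) ≤ (1/2 : ℂ) * ((starRingEnd ℂ) (x (i,j)) * x (i,j)
          + (starRingEnd ℂ) (x (j,i)) * x (j,i))
        + (((1 / (2 * (n:ℝ) - 2) : ℝ) : ℂ) *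
            ((starRingEnd ℂ) (x (i,i)) * x (i,i) + (starRingEnd ℂ) (x (j,j)) * x (j,j))
          + (((if i < j then (1:ℝ) else -1) / (2 * (n:ℝ) - 2) : ℝ) : ℂ) *
            ((starRingEnd ℂ) (x (j,j)) * x (i,i) + (starRingEnd ℂ) (x (i,i)) * x (j,j))) := by
          refine add_nonneg k1 ?_
          rw [comm1]
          calc (0:ℂ) ≤ _ := k2
          _ = _ := by ring
      _ = _ := by ring
end PT

section SUM
variable {n : ℕ}

lemma one_eq : ∑ i : Fin n, ∑ j : Fin n,
    Matrix.single ((i,j) : Fin n × Fin n) ((i,j) : Fin n × Fin n) (1:ℂ) = 1 := by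
  ext ⟨a1, a2⟩ ⟨b1, b2⟩
  simp only [Matrix.sum_apply, Matrix.single, of_apply, Prod.mk.injEq, Matrix.one_apply]
  by_cases h : a1 = b1 ∧ a2 = b2
  · obtain ⟨rfl, rfl⟩ := h
    simp [ite_and, Finset.sum_ite_eq']
  · rw [if_neg (by simpa [Prod.ext_iff] using h)]
    apply Finset.sum_eq_zero
    intro c _
    apply Finset.sum_eq_zero
    intro d _
    rw [if_neg]
    rintro ⟨⟨rfl, rfl⟩, ⟨rfl, rfl⟩⟩
    exact h ⟨rfl, rfl⟩

lemma fourierP_sum (hn : 3 ≤ n) : ∑ i, ∑ j, fourierP n i j = 1 := by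
  classical
  set E : Fin n → Fin n → Matrix (Fin n × Fin n) (Fin n × Fin n) ℂ :=
    fun i j => Matrix.single ((i,j) : Fin n × Fin n) ((i,j) : Fin n × Fin n) (1:ℂ) with hE
  have hnz : (2 * (n:ℂ) - 2) ≠ 0 := by
    have h3 : (3:ℝ) ≤ (n:ℝ) := by exact_mod_cast hn
    intro hcon
    have : (2 * (n:ℂ) - 2).re = 0 := by rw [hcon]; simp
    simp only [Complex.sub_re, Complex.mul_re, Complex.re_ofNat, Complex.im_ofNat,
      Complex.natCast_re, Complex.natCast_im] at this
    norm_num at this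
    linarith
  have split : ∀ i j : Fin n, fourierP n i j =
      ((if i = j then 0 else (1/2 : ℂ) • (Matrix.single ((i,j) : Fin n × Fin n) (i,j) (1:ℂ) +
        Matrix.single ((j,i) : Fin n × Fin n) (j,i) (1:ℂ))) +
      (if i = j then 0 else (((if i < j then 1 else -1) : ℂ) / (2 * (n : ℂ) - 2)) •
        (Matrix.single ((i,j) : Fin n × Fin n) (j,i) (1:ℂ) +
          Matrix.single ((j,i) : Fin n × Fin n) (i,j) (1:ℂ))) +
      (if i = j then 0 else (1 / (2 * (n : ℂ) - 2)) •
        (Matrix.single ((i,i) : Fin n × Fin n) (i,i) (1:ℂ) +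
          Matrix.single ((j,j) : Fin n × Fin n) (j,j) (1:ℂ)))) := by
    intro i j
    rw [fourierP]
    split_ifs <;> simp
  calc ∑ i, ∑ j, fourierP n i j
      = (∑ i, ∑ j, (if i = j then 0 else (1/2 : ℂ) •
          (Matrix.single ((i,j) : Fin n × Fin n) (i,j) (1:ℂ) +
            Matrix.single ((j,i) : Fin n × Fin n) (j,i) (1:ℂ)))) +
        (∑ i, ∑ j, (if i = j then 0 else (((if i < j then 1 else -1) : ℂ) / (2 * (n : ℂ) - 2)) •
          (Matrix.single ((i,j) : Fin n × Fin n) (j,i) (1:ℂ) +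
            Matrix.single ((j,i) : Fin n × Fin n) (i,j) (1:ℂ)))) +
        (∑ i, ∑ j, (if i = j then 0 else (1 / (2 * (n : ℂ) - 2)) •
          (Matrix.single ((i,i) : Fin n × Fin n) (i,i) (1:ℂ) +
            Matrix.single ((j,j) : Fin n × Fin n) (j,j) (1:ℂ)))) := by
        simp_rw [split, Finset.sum_add_distrib]
    _ = 1 := by
        have hinv : (2 * (n:ℂ) - 2) * (1 / (2 * (n : ℂ) - 2)) = 1 := by
          exact mul_one_div_cancel hnz
        -- S2 = 0
        have hS2 : (∑ i, ∑ j, (if i = j then 0 else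
            (((if i < j then 1 else -1) : ℂ) / (2 * (n : ℂ) - 2)) •
            (Matrix.single ((i,j) : Fin n × Fin n) (j,i) (1:ℂ) +
              Matrix.single ((j,i) : Fin n × Fin n) (i,j) (1:ℂ))))
            = (0 : Matrix (Fin n × Fin n) (Fin n × Fin n) ℂ) := by
          set g : Fin n → Fin n → Matrix (Fin n × Fin n) (Fin n × Fin n) ℂ := fun i j =>
            if i = j then 0 else (((if i < j then 1 else -1) : ℂ) / (2 * (n : ℂ) - 2)) •
            (Matrix.single ((i,j) : Fin n × Fin n) (j,i) (1:ℂ) +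
              Matrix.single ((j,i) : Fin n × Fin n) (i,j) (1:ℂ)) with hg
          have hneg : ∀ i j, g j i = - g i j := by
            intro i j
            rcases eq_or_ne i j with rfl | hij
            · simp [hg]
            · rw [hg]
              simp only [if_neg hij, if_neg (Ne.symm hij)]
              have hsgn : (if j < i then (1:ℂ) else -1) = -(if i < j then 1 else -1) := by
                rcases hij.lt_or_gt with hlt | hlt
                · rw [if_neg (not_lt_of_gt hlt), if_pos hlt]
                · rw [if_pos hlt, if_neg (not_lt_of_gt hlt)]
                  norm_num
              rw [hsgn, neg_div, neg_smul, neg_inj, add_comm]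
          have hswap : ∑ i, ∑ j, g i j = ∑ i, ∑ j, g j i := Finset.sum_comm
          have : ∑ i, ∑ j, g i j = - ∑ i, ∑ j, g i j := by
            nth_rewrite 1 [hswap]
            rw [← Finset.sum_neg_distrib]
            refine Finset.sum_congr rfl fun i _ => ?_
            rw [← Finset.sum_neg_distrib]
            exact Finset.sum_congr rfl fun j _ => hneg i j
          have h2 : (2:ℂ) • (∑ i, ∑ j, g i j) = 0 := by
            rw [two_smul]
            nth_rewrite 1 [this]
            simp
          have := smul_eq_zero.mp h2
          rcases this with hc | hok
          · norm_num at hc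
          · exact hok
        rw [hS2, add_zero]
        -- S1
        have hS1 : (∑ i, ∑ j, (if i = j then 0 else (1/2 : ℂ) •
            (Matrix.single ((i,j) : Fin n × Fin n) (i,j) (1:ℂ) +
              Matrix.single ((j,i) : Fin n × Fin n) (j,i) (1:ℂ))))
            = ∑ i, ∑ j, (if i = j then 0 else
                Matrix.single ((i,j) : Fin n × Fin n) (i,j) (1:ℂ)) := by
          have split2 : ∀ i j : Fin n, (if i = j then 0 else (1/2 : ℂ) •
              (Matrix.single ((i,j) : Fin n × Fin n) (i,j) (1:ℂ) +
                Matrix.single ((j,i) : Fin n × Fin n) (j,i) (1:ℂ)))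
              = (if i = j then 0 else (1/2 : ℂ) •
                  Matrix.single ((i,j) : Fin n × Fin n) (i,j) (1:ℂ)) +
                (if i = j then 0 else (1/2 : ℂ) •
                  Matrix.single ((j,i) : Fin n × Fin n) (j,i) (1:ℂ)) := by
            intro i j
            split_ifs <;> simp [smul_add]
          simp_rw [split2, Finset.sum_add_distrib]
          have hsw : (∑ i, ∑ j, (if i = j then 0 else (1/2 : ℂ) •
              Matrix.single ((j,i) : Fin n × Fin n) (j,i) (1:ℂ)))
              = ∑ i, ∑ j, (if i = j then 0 else (1/2 : ℂ) •
                Matrix.single ((i,j) : Fin n × Fin n) (i,j) (1:ℂ)) := by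
            rw [Finset.sum_comm]
            refine Finset.sum_congr rfl fun i _ => Finset.sum_congr rfl fun j _ => ?_
            rcases eq_or_ne i j with rfl | hij
            · simp
            · rw [if_neg (Ne.symm hij), if_neg hij]
          rw [hsw, ← Finset.sum_add_distrib]
          refine Finset.sum_congr rfl fun i _ => ?_
          rw [← Finset.sum_add_distrib]
          refine Finset.sum_congr rfl fun j _ => ?_
          split_ifs
          · simp
          · rw [← add_smul]
            norm_num
        rw [hS1]
        -- S3
        have hS3 : (∑ i, ∑ j, (if i = j then 0 else (1 / (2 * (n : ℂ) - 2)) •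
            (Matrix.single ((i,i) : Fin n × Fin n) (i,i) (1:ℂ) +
              Matrix.single ((j,j) : Fin n × Fin n) (j,j) (1:ℂ))))
            = ∑ i : Fin n, Matrix.single ((i,i) : Fin n × Fin n) (i,i) (1:ℂ) := by
          have split3 : ∀ i j : Fin n, (if i = j then 0 else (1 / (2 * (n : ℂ) - 2)) •
              (Matrix.single ((i,i) : Fin n × Fin n) (i,i) (1:ℂ) +
                Matrix.single ((j,j) : Fin n × Fin n) (j,j) (1:ℂ)))
              = (if i = j then 0 else (1 / (2 * (n : ℂ) - 2)) •
                  Matrix.single ((i,i) : Fin n × Fin n) (i,i) (1:ℂ)) +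
                (if i = j then 0 else (1 / (2 * (n : ℂ) - 2)) •
                  Matrix.single ((j,j) : Fin n × Fin n) (j,j) (1:ℂ)) := by
            intro i j
            split_ifs <;> simp [smul_add]
          simp_rw [split3, Finset.sum_add_distrib]
          have hsw : (∑ i, ∑ j, (if i = j then 0 else (1 / (2 * (n : ℂ) - 2)) •
              Matrix.single ((j,j) : Fin n × Fin n) (j,j) (1:ℂ)))
              = ∑ i, ∑ j, (if i = j then 0 else (1 / (2 * (n : ℂ) - 2)) •
                Matrix.single ((i,i) : Fin n × Fin n) (i,i) (1:ℂ)) := by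
            rw [Finset.sum_comm]
            refine Finset.sum_congr rfl fun i _ => Finset.sum_congr rfl fun j _ => ?_
            rcases eq_or_ne i j with rfl | hij
            · simp
            · rw [if_neg (Ne.symm hij), if_neg hij]
          rw [hsw]
          have inner : ∀ i : Fin n, (∑ j, ((if i = j then 0 else (1 / (2 * (n : ℂ) - 2)) •
              Matrix.single ((i,i) : Fin n × Fin n) (i,i) (1:ℂ)) +
              (if i = j then 0 else (1 / (2 * (n : ℂ) - 2)) •
              Matrix.single ((i,i) : Fin n × Fin n) (i,i) (1:ℂ))))
              = Matrix.single ((i,i) : Fin n × Fin n) (i,i) (1:ℂ) := by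
            intro i
            set w := (1 / (2 * (n : ℂ) - 2)) •
              Matrix.single ((i,i) : Fin n × Fin n) ((i,i) : Fin n × Fin n) (1:ℂ) with hw
            have hval : ∀ j : Fin n, ((if i = j then 0 else w) + (if i = j then 0 else w))
                = (2:ℂ) • w - (if i = j then (2:ℂ) • w else 0) := by
              intro j
              split_ifs <;> simp [two_smul]
            simp_rw [hval, Finset.sum_sub_distrib, Finset.sum_const, Finset.sum_ite_eq,
              Finset.mem_univ, if_pos, Finset.card_univ, Fintype.card_fin]
            rw [← Nat.cast_smul_eq_nsmul ℂ, smul_smul, ← sub_smul, hw, smul_smul]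
            have harith : ((n:ℂ) * 2 - 2) * (1 / (2 * (n : ℂ) - 2)) = 1 := by
              rw [mul_comm (n:ℂ) 2]; exact mul_one_div_cancel hnz
            rw [harith, one_smul]
          rw [← Finset.sum_add_distrib]
          refine Finset.sum_congr rfl fun i _ => ?_
          rw [← Finset.sum_add_distrib]
          exact inner i
        rw [hS3]
        -- assemble
        have hdiag : (∑ i : Fin n, Matrix.single ((i,i) : Fin n × Fin n) (i,i) (1:ℂ))
            = ∑ i : Fin n, ∑ j : Fin n, (if i = j then
                Matrix.single ((i,j) : Fin n × Fin n) (i,j) (1:ℂ) else 0) := by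
          refine Finset.sum_congr rfl fun i _ => ?_
          rw [Finset.sum_ite_eq, if_pos (Finset.mem_univ i)]
        rw [hdiag, ← Finset.sum_add_distrib]
        rw [← one_eq]
        refine Finset.sum_congr rfl fun i _ => ?_
        rw [← Finset.sum_add_distrib]
        refine Finset.sum_congr rfl fun j _ => ?_
        split_ifs <;> simp
end SUM

section PHI
variable {n : ℕ}

lemma sq2 : ((Real.sqrt 2 : ℝ) : ℂ)⁻¹ * ((Real.sqrt 2 : ℝ) : ℂ)⁻¹ = 1/2 := by
  rw [← mul_inv, ← Complex.ofReal_mul, Real.mul_self_sqrt (by norm_num)]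
  norm_num

lemma conj_sq2 : (starRingEnd ℂ) ((Real.sqrt 2 : ℝ) : ℂ)⁻¹ = ((Real.sqrt 2 : ℝ) : ℂ)⁻¹ := by
  rw [map_inv₀, Complex.conj_ofReal]

lemma ldoi_ne {i j : Fin n} (h : i ≠ j) :
    ldoiBasis (fourierU n) (halfA n) i j =
      Pi.single ((i,j) : Fin n × Fin n)
          (((if i < j then 1 else -1) : ℂ) * ((Real.sqrt 2 : ℝ) : ℂ)⁻¹)
        + Pi.single ((j,i) : Fin n × Fin n) ((Real.sqrt 2 : ℝ) : ℂ)⁻¹ := by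
  have hne1 : ((i,j) : Fin n × Fin n) ≠ (j,i) := by
    simp only [ne_eq, Prod.mk.injEq, not_and]
    intro h1
    exact absurd h1 h
  funext p
  rw [ldoiBasis, if_neg h]
  rcases h.lt_or_gt with hlt | hlt
  · rw [if_pos hlt]
    simp only [halfA, Pi.add_apply, Pi.single_apply, if_pos hlt, one_mul, conj_sq2]
    rcases eq_or_ne p ((i,j) : Fin n × Fin n) with rfl | hp1
    · simp [hne1]
    · simp [hp1]
  · rw [if_neg (not_lt_of_gt hlt)]
    simp only [halfA, Pi.add_apply, Pi.single_apply, if_neg (not_lt_of_gt hlt), neg_one_mul,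
      conj_sq2]
    rcases eq_or_ne p ((i,j) : Fin n × Fin n) with rfl | hp1
    · simp [hne1]
    · simp [hp1]

lemma ldoi_vals {i j : Fin n} (h : i ≠ j) :
    ldoiBasis (fourierU n) (halfA n) i j (i,j)
        = ((if i < j then 1 else -1) : ℂ) * ((Real.sqrt 2 : ℝ) : ℂ)⁻¹
      ∧ ldoiBasis (fourierU n) (halfA n) i j (j,i) = ((Real.sqrt 2 : ℝ) : ℂ)⁻¹
      ∧ ldoiBasis (fourierU n) (halfA n) i j (i,i) = 0
      ∧ ldoiBasis (fourierU n) (halfA n) i j (j,j) = 0 := by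
  rw [ldoi_ne h]
  refine ⟨?_, ?_, ?_, ?_⟩ <;>
    simp [Pi.single_apply, Prod.ext_iff, h, Ne.symm h]

lemma part4 (hn : 3 ≤ n) {i j : Fin n} (h : i ≠ j) :
    star (ldoiBasis (fourierU n) (halfA n) i j) ⬝ᵥ
      (fourierP n i j *ᵥ ldoiBasis (fourierU n) (halfA n) i j)
      = (n:ℂ)/(2*(n:ℂ)-2) := by
  obtain ⟨v1, v2, v3, v4⟩ := ldoi_vals h
  rw [fourierP_quadform h, v1, v2, v3, v4]
  have hnz : (2 * (n:ℂ) - 2) ≠ 0 := by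
    have h3 : (3:ℝ) ≤ (n:ℝ) := by exact_mod_cast hn
    intro hcon
    have : (2 * (n:ℂ) - 2).re = 0 := by rw [hcon]; simp
    simp only [Complex.sub_re, Complex.mul_re, Complex.re_ofNat, Complex.im_ofNat,
      Complex.natCast_re, Complex.natCast_im] at this
    norm_num at this
    linarith
  have final : (1:ℂ)/2 + 1/(2*(n:ℂ)-2) = (n:ℂ)/(2*(n:ℂ)-2) := by
    rw [div_add_div _ _ two_ne_zero hnz, div_eq_div_iff (mul_ne_zero two_ne_zero hnz) hnz]; ring
  split_ifs with hlt
  · simp only [_root_.map_mul, _root_.map_one, map_neg, conj_sq2, _root_.map_zero, one_mul, neg_one_mul, mul_zero,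
      zero_mul, add_zero, mul_neg, neg_mul, neg_neg]
    rw [← final]
    linear_combination (1 + 2*((1:ℂ)/(2*(n:ℂ)-2))) * sq2
  · simp only [_root_.map_mul, _root_.map_one, map_neg, conj_sq2, _root_.map_zero, one_mul, neg_one_mul, mul_zero,
      zero_mul, add_zero, mul_neg, neg_mul, neg_neg]
    rw [← final]
    linear_combination (1 + 2*((1:ℂ)/(2*(n:ℂ)-2))) * sq2
end PHI

section P5
variable {n : ℕ}

lemma part5 (hn : 3 ≤ n) :
    (1 / (n : ℝ) ^ 2) *
      ∑ i, ∑ j, (star (ldoiBasis (fourierU n) (halfA n) i j) ⬝ᵥ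
        (fourierP n i j *ᵥ ldoiBasis (fourierU n) (halfA n) i j)).re = 1 / 2 := by
  have h3 : (3:ℝ) ≤ (n:ℝ) := by exact_mod_cast hn
  have hn0 : (n:ℝ) ≠ 0 := by linarith
  have h2n : 2*(n:ℝ)-2 ≠ 0 := by linarith
  have hval : ∀ i j : Fin n, (star (ldoiBasis (fourierU n) (halfA n) i j) ⬝ᵥ
      (fourierP n i j *ᵥ ldoiBasis (fourierU n) (halfA n) i j)).re
      = if i = j then 0 else (n:ℝ)/(2*(n:ℝ)-2) := by
    intro i j
    rcases eq_or_ne i j with rfl | h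
    · rw [show fourierP n i i = 0 from if_pos rfl, Matrix.zero_mulVec, dotProduct_zero,
        if_pos rfl, Complex.zero_re]
    · rw [part4 hn h, if_neg h,
        show (n:ℂ)/(2*(n:ℂ)-2) = (((n:ℝ)/(2*(n:ℝ)-2) : ℝ) : ℂ) by push_cast; ring,
        Complex.ofReal_re]
  simp_rw [hval]
  have hsumj : ∀ i : Fin n, ∑ j : Fin n, (if i = j then (0:ℝ) else (n:ℝ)/(2*(n:ℝ)-2))
      = (n:ℝ) * ((n:ℝ)/(2*(n:ℝ)-2)) - (n:ℝ)/(2*(n:ℝ)-2) := by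
    intro i
    have hswap : ∀ j : Fin n, (if i = j then (0:ℝ) else (n:ℝ)/(2*(n:ℝ)-2))
        = (n:ℝ)/(2*(n:ℝ)-2) - (if i = j then (n:ℝ)/(2*(n:ℝ)-2) else 0) := by
      intro j
      split_ifs <;> simp
    simp_rw [hswap]
    rw [Finset.sum_sub_distrib, Finset.sum_const, Finset.sum_ite_eq,
      if_pos (Finset.mem_univ i), Finset.card_univ, Fintype.card_fin, nsmul_eq_mul]
  simp_rw [hsumj]
  rw [Finset.sum_const, Finset.card_univ, Fintype.card_fin, nsmul_eq_mul]
  field_simp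
  exact div_self (ne_of_gt (by linarith))

lemma ldoi_diag (U A : Matrix (Fin n) (Fin n) ℂ) (i : Fin n) :
    ldoiBasis U A i i = fun p => if p.1 = p.2 then U i p.1 else 0 := by
  rw [ldoiBasis, if_pos rfl]

lemma fourierU_abs (hn : 3 ≤ n) (i k : Fin n) :
    ‖fourierU n i k‖ = (Real.sqrt n)⁻¹ := by
  have hz : 2 * (Real.pi : ℂ) * Complex.I * ((i : ℕ) : ℂ) * ((k : ℕ) : ℂ) / n
      = (((2 * Real.pi * (i:ℕ) * (k:ℕ) / n : ℝ)) : ℂ) * Complex.I := by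
    push_cast
    ring
  rw [fourierU, hz, norm_div, Complex.norm_exp_ofReal_mul_I, Complex.norm_real, Real.norm_eq_abs,
    abs_of_nonneg (Real.sqrt_nonneg _), one_div]

lemma diag_abs_bound {M : Matrix (Fin n × Fin n) (Fin n × Fin n) ℂ} (hM : M.PosSemidef)
    (hPT : (ptranspose M).PosSemidef) (k l : Fin n) :
    ‖M (k,k) (l,l)‖ ≤ ((M (l,k) (l,k)).re + (M (k,l) (k,l)).re) / 2 := by
  rcases eq_or_ne k l with rfl | hkl
  · obtain ⟨h1, h2⟩ := psd_diag hM (k,k)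
    have hre : M (k,k) (k,k) = (((M (k,k) (k,k)).re : ℝ) : ℂ) := Complex.ext rfl (by simp [h2])
    rw [hre, Complex.norm_real, Real.norm_eq_abs, abs_of_nonneg h1]
    simp only [Complex.ofReal_re]
    linarith
  · have hne : ((l,k) : Fin n × Fin n) ≠ (k,l) := by
      simp only [ne_eq, Prod.mk.injEq, not_and]
      intro h1
      exact absurd h1 (Ne.symm hkl)
    have h := psd_offdiag hPT hne
    have e1 : ptranspose M (l,k) (k,l) = M (k,k) (l,l) := rfl
    have e2 : ptranspose M (l,k) (l,k) = M (l,k) (l,k) := rfl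
    have e3 : ptranspose M (k,l) (k,l) = M (k,l) (k,l) := rfl
    rw [e1, e2, e3] at h
    linarith

lemma diag_quadform (M : Matrix (Fin n × Fin n) (Fin n × Fin n) ℂ) (i : Fin n) :
    star (ldoiBasis (fourierU n) (halfA n) i i) ⬝ᵥ
      (M *ᵥ ldoiBasis (fourierU n) (halfA n) i i)
      = ∑ k, ∑ l, (starRingEnd ℂ) (fourierU n i k) * (M (k,k) (l,l) * fourierU n i l) := by
  rw [ldoi_diag]
  simp only [dotProduct, mulVec, Pi.star_apply, Complex.star_def, Fintype.sum_prod_type,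
    apply_ite (starRingEnd ℂ), map_zero, ite_mul, zero_mul, mul_ite, mul_zero,
    Finset.mul_sum]
  have comm : ∀ (a b c d : Fin n) (t : ℂ),
      (if c = d then (if a = b then t else 0) else 0)
        = if a = b then (if c = d then t else 0) else 0 := by
    intros a b c d t
    split_ifs <;> rfl
  refine Finset.sum_congr rfl fun k _ => ?_
  simp_rw [comm]
  rw [Finset.sum_comm]
  refine Finset.sum_congr rfl fun l _ => ?_
  rw [Finset.sum_comm]
  simp only [Finset.sum_ite_eq, Finset.mem_univ, if_true]
end P5

section G
variable {n : ℕ}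

lemma G1 (hn : 3 ≤ n) {M : Matrix (Fin n × Fin n) (Fin n × Fin n) ℂ} (hM : M.PosSemidef)
    (hPT : (ptranspose M).PosSemidef) (i : Fin n) :
    (star (ldoiBasis (fourierU n) (halfA n) i i) ⬝ᵥ
        (M *ᵥ ldoiBasis (fourierU n) (halfA n) i i)).re
      ≤ (1/(n:ℝ)) * ∑ p : Fin n × Fin n, (M p p).re := by
  have hnpos : (0:ℝ) < n := by
    have : (3:ℝ) ≤ (n:ℝ) := by exact_mod_cast hn
    linarith
  rw [diag_quadform, Complex.re_sum]
  simp_rw [Complex.re_sum]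
  have hterm : ∀ k l : Fin n, ((starRingEnd ℂ) (fourierU n i k)
        * (M (k,k) (l,l) * fourierU n i l)).re
      ≤ (1/(n:ℝ)) * (((M (l,k) (l,k)).re + (M (k,l) (k,l)).re)/2) := by
    intro k l
    refine le_trans (Complex.re_le_norm _) ?_
    rw [norm_mul, norm_mul, Complex.norm_conj, fourierU_abs hn, fourierU_abs hn]
    have hsq : (Real.sqrt n)⁻¹ * (‖M (k,k) (l,l)‖ * (Real.sqrt n)⁻¹)
        = (1/(n:ℝ)) * ‖M (k,k) (l,l)‖ := by
      rw [show (Real.sqrt n)⁻¹ * (‖M (k,k) (l,l)‖ * (Real.sqrt n)⁻¹)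
        = ((Real.sqrt n) * (Real.sqrt n))⁻¹ * ‖M (k,k) (l,l)‖ by
          rw [mul_inv]; ring]
      rw [Real.mul_self_sqrt (le_of_lt hnpos), one_div]
    rw [hsq]
    exact mul_le_mul_of_nonneg_left (diag_abs_bound hM hPT k l) (by positivity)
  refine le_trans (Finset.sum_le_sum fun k _ => Finset.sum_le_sum fun l _ => hterm k l) ?_
  rw [Fintype.sum_prod_type (f := fun p : Fin n × Fin n => (M p p).re)]
  simp_rw [← Finset.mul_sum]
  apply le_of_eq
  congr 1
  simp_rw [div_eq_mul_inv, add_mul, Finset.sum_add_distrib]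
  have hswap : ∑ k : Fin n, ∑ l : Fin n, (M (l,k) (l,k)).re * (2:ℝ)⁻¹
      = ∑ k : Fin n, ∑ l : Fin n, (M (k,l) (k,l)).re * (2:ℝ)⁻¹ := Finset.sum_comm
  rw [hswap, ← Finset.sum_add_distrib]
  refine Finset.sum_congr rfl fun k _ => ?_
  rw [← Finset.sum_add_distrib]
  refine Finset.sum_congr rfl fun l _ => ?_
  ring

lemma G2 {M : Matrix (Fin n × Fin n) (Fin n × Fin n) ℂ} (hM : M.PosSemidef)
    (hPT : (ptranspose M).PosSemidef) {i j : Fin n} (h : i ≠ j) :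
    (star (ldoiBasis (fourierU n) (halfA n) i j) ⬝ᵥ
        (M *ᵥ ldoiBasis (fourierU n) (halfA n) i j)).re
      ≤ ((M (i,j) (i,j)).re + (M (j,i) (j,i)).re
          + (M (i,i) (i,i)).re + (M (j,j) (j,j)).re) / 2 := by
  set t : ℂ := ((Real.sqrt 2 : ℝ) : ℂ)⁻¹ with ht
  set c1 : ℂ := ((if i < j then 1 else -1) : ℂ) * t with hc1
  rw [ldoi_ne h, quad_two]
  have hstar_c1 : star c1 = c1 := by
    rw [hc1, star_mul']
    congr 1
    · split_ifs <;> simp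
    · exact conj_sq2
  have hstar_t : star t = t := conj_sq2
  have hcc1 : c1 * c1 = 1/2 := by
    rw [hc1]
    split_ifs <;> (ring_nf; rw [show t^2 = t * t by ring, sq2]) <;> norm_num
  have habs_t : ‖t‖ = (Real.sqrt 2)⁻¹ := by
    rw [ht, norm_inv, Complex.norm_real, Real.norm_eq_abs, abs_of_nonneg (Real.sqrt_nonneg _)]
  have habs_c1 : ‖c1‖ = (Real.sqrt 2)⁻¹ := by
    rw [hc1, norm_mul]
    split_ifs <;> simp [habs_t]
  have hinv2 : (Real.sqrt 2)⁻¹ * (Real.sqrt 2)⁻¹ = 1/2 := by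
    rw [← mul_inv, Real.mul_self_sqrt (by norm_num)]
    norm_num
  -- diagonal terms
  have hterm1 : (star c1 * (M (i,j) (i,j) * c1)).re = (1/2) * (M (i,j) (i,j)).re := by
    rw [show star c1 * (M (i,j) (i,j) * c1) = (c1 * c1) * M (i,j) (i,j) by
      rw [hstar_c1]; ring, hcc1,
      show ((1:ℂ)/2) = (((1:ℝ)/2 : ℝ) : ℂ) by norm_num, Complex.re_ofReal_mul]
  have hterm4 : (star t * (M (j,i) (j,i) * t)).re = (1/2) * (M (j,i) (j,i)).re := by
    rw [show star t * (M (j,i) (j,i) * t) = (t * t) * M (j,i) (j,i) by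
      rw [hstar_t]; ring, sq2,
      show ((1:ℂ)/2) = (((1:ℝ)/2 : ℝ) : ℂ) by norm_num, Complex.re_ofReal_mul]
  -- cross terms
  have hne1 : ((j,j) : Fin n × Fin n) ≠ (i,i) := by
    simp only [ne_eq, Prod.mk.injEq, not_and]
    intro h1
    exact absurd h1.symm h
  have hne2 : ((i,i) : Fin n × Fin n) ≠ (j,j) := Ne.symm hne1
  have e1 : ptranspose M (j,j) (i,i) = M (i,j) (j,i) := rfl
  have e2 : ptranspose M (i,i) (j,j) = M (j,i) (i,j) := rfl
  have e3 : ptranspose M (j,j) (j,j) = M (j,j) (j,j) := rfl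
  have e4 : ptranspose M (i,i) (i,i) = M (i,i) (i,i) := rfl
  have hb1 := psd_offdiag hPT hne1
  rw [e1, e3, e4] at hb1
  have hb2 := psd_offdiag hPT hne2
  rw [e2, e3, e4] at hb2
  have hcross1 : (star c1 * (M (i,j) (j,i) * t)).re ≤ (1/2) * ‖M (i,j) (j,i)‖ := by
    refine le_trans (Complex.re_le_norm _) ?_
    rw [hstar_c1, norm_mul c1 (M (i,j) (j,i) * t),
      norm_mul (M (i,j) (j,i)) t, habs_c1, habs_t]
    refine le_of_eq ?_
    rw [show (Real.sqrt 2)⁻¹ * (‖M (i,j) (j,i)‖ * (Real.sqrt 2)⁻¹)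
      = ((Real.sqrt 2)⁻¹ * (Real.sqrt 2)⁻¹) * ‖M (i,j) (j,i)‖ by ring, hinv2]
  have hcross2 : (star t * (M (j,i) (i,j) * c1)).re ≤ (1/2) * ‖M (j,i) (i,j)‖ := by
    refine le_trans (Complex.re_le_norm _) ?_
    rw [hstar_t, norm_mul t (M (j,i) (i,j) * c1),
      norm_mul (M (j,i) (i,j)) c1, habs_t, habs_c1]
    refine le_of_eq ?_
    rw [show (Real.sqrt 2)⁻¹ * (‖M (j,i) (i,j)‖ * (Real.sqrt 2)⁻¹)
      = ((Real.sqrt 2)⁻¹ * (Real.sqrt 2)⁻¹) * ‖M (j,i) (i,j)‖ by ring, hinv2]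
  simp only [Complex.add_re]
  rw [hterm1, hterm4]
  linarith [hcross1, hcross2, hb1, hb2]
end G

section MAIN
variable {n : ℕ}

lemma part6 (hn : 3 ≤ n) (P : Fin n → Fin n → Matrix (Fin n × Fin n) (Fin n × Fin n) ℂ)
    (hPSD : ∀ i j, (P i j).PosSemidef) (hsum : ∑ i, ∑ j, P i j = 1)
    (hPPT : ∀ i j, (ptranspose (P i j)).PosSemidef) :
    (1 / (n : ℝ) ^ 2) *
      ∑ i, ∑ j, (star (ldoiBasis (fourierU n) (halfA n) i j) ⬝ᵥ
        (P i j *ᵥ ldoiBasis (fourierU n) (halfA n) i j)).re ≤ 1 / 2 := by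
  have h3 : (3:ℝ) ≤ (n:ℝ) := by exact_mod_cast hn
  have hnpos : (0:ℝ) < n := by linarith
  have hd0 : ∀ i j p, 0 ≤ ((P i j) p p).re := fun i j p => (psd_diag (hPSD i j) p).1
  have F2 : ∀ p : Fin n × Fin n, ∑ i, ∑ j, ((P i j) p p).re = 1 := by
    intro p
    have h1 : ∑ i, ∑ j, (P i j) p p = 1 := by
      have := congrArg (fun M : Matrix (Fin n × Fin n) (Fin n × Fin n) ℂ => M p p) hsum
      simp only [Matrix.sum_apply] at this
      rwa [Matrix.one_apply_eq] at this
    simp_rw [← Complex.re_sum]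
    rw [h1, Complex.one_re]
  -- termwise bound
  have hB : ∀ i j : Fin n,
      (star (ldoiBasis (fourierU n) (halfA n) i j) ⬝ᵥ
        (P i j *ᵥ ldoiBasis (fourierU n) (halfA n) i j)).re
      ≤ (1/2) * ∑ p : Fin n × Fin n, ((P i j) p p).re := by
    intro i j
    rcases eq_or_ne i j with rfl | h
    · refine le_trans (G1 hn (hPSD i i) (hPPT i i) i) ?_
      have hT : 0 ≤ ∑ p : Fin n × Fin n, ((P i i) p p).re :=
        Finset.sum_nonneg fun p _ => hd0 i i p
      apply mul_le_mul_of_nonneg_right ?_ hT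
      rw [one_div, one_div]
      exact inv_anti₀ (by norm_num) (by linarith)
    · refine le_trans (G2 (hPSD i j) (hPPT i j) h) ?_
      rw [div_eq_mul_inv, mul_comm _ (2:ℝ)⁻¹, ← one_div]
      apply mul_le_mul_of_nonneg_left ?_ (by norm_num)
      -- sum of four distinct diagonal entries ≤ total sum
      have hne12 : ((i,j) : Fin n × Fin n) ∉
          ({(j,i),(i,i),(j,j)} : Finset (Fin n × Fin n)) := by
        simp [Prod.ext_iff, h, Ne.symm h]
      have hne23 : ((j,i) : Fin n × Fin n) ∉
          ({(i,i),(j,j)} : Finset (Fin n × Fin n)) := by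
        simp [Prod.ext_iff, h, Ne.symm h]
      have hne34 : ((i,i) : Fin n × Fin n) ∉ ({(j,j)} : Finset (Fin n × Fin n)) := by
        simp [Prod.ext_iff, h]
      have heq : ((P i j) (i,j) (i,j)).re + ((P i j) (j,i) (j,i)).re
          + ((P i j) (i,i) (i,i)).re + ((P i j) (j,j) (j,j)).re
          = ∑ p ∈ ({(i,j),(j,i),(i,i),(j,j)} : Finset (Fin n × Fin n)), ((P i j) p p).re := by
        rw [Finset.sum_insert hne12, Finset.sum_insert hne23, Finset.sum_insert hne34,
          Finset.sum_singleton]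
        ring
      rw [heq]
      exact Finset.sum_le_sum_of_subset_of_nonneg (Finset.subset_univ _)
        (fun p _ _ => hd0 i j p)
  have hS : ∑ i, ∑ j, (star (ldoiBasis (fourierU n) (halfA n) i j) ⬝ᵥ
      (P i j *ᵥ ldoiBasis (fourierU n) (halfA n) i j)).re
      ≤ (1/2) * ((n:ℝ) * (n:ℝ)) := by
    refine le_trans (Finset.sum_le_sum fun i _ => Finset.sum_le_sum fun j _ => hB i j) ?_
    simp_rw [← Finset.mul_sum]
    have hsw : ∑ i : Fin n, ∑ j : Fin n, ∑ p : Fin n × Fin n, ((P i j) p p).re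
        = ∑ p : Fin n × Fin n, ∑ i : Fin n, ∑ j : Fin n, ((P i j) p p).re := by
      calc ∑ i : Fin n, ∑ j : Fin n, ∑ p : Fin n × Fin n, ((P i j) p p).re
          = ∑ i : Fin n, ∑ p : Fin n × Fin n, ∑ j : Fin n, ((P i j) p p).re :=
            Finset.sum_congr rfl fun i _ => Finset.sum_comm
        _ = ∑ p : Fin n × Fin n, ∑ i : Fin n, ∑ j : Fin n, ((P i j) p p).re :=
            Finset.sum_comm
    rw [hsw]
    simp_rw [F2]
    rw [Finset.sum_const, Finset.card_univ, Fintype.card_prod, Fintype.card_fin,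
      nsmul_eq_mul]
    push_cast
    ring_nf
    exact le_refl _
  calc (1 / (n : ℝ) ^ 2) *
      ∑ i, ∑ j, (star (ldoiBasis (fourierU n) (halfA n) i j) ⬝ᵥ
        (P i j *ᵥ ldoiBasis (fourierU n) (halfA n) i j)).re
      ≤ (1 / (n : ℝ) ^ 2) * ((1/2) * ((n:ℝ) * (n:ℝ))) := by
        exact mul_le_mul_of_nonneg_left hS (by positivity)
    _ = 1/2 := by
        field_simp
end MAIN

end Helpers

/-- For `n ≥ 3`, the Fourier-basis LDOI ensemble (with `a_{i,j} = 1/√2` for `i ≠ j`):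
`(P_{i,j})` is a PPT POVM, `⟨φ_{i,j}, P_{i,j} φ_{i,j}⟩ = n/(2n−2)` for all `i ≠ j`, its
success probability for the uniform ensemble equals exactly `1/2`, and every PPT POVM has
success probability at most `1/2`. -/
theorem fourier_ppt_value (n : ℕ) (hn : 3 ≤ n) :
    (∀ i j : Fin n, (fourierP n i j).PosSemidef) ∧
    (∑ i, ∑ j, fourierP n i j = 1) ∧
    (∀ i j : Fin n, (ptranspose (fourierP n i j)).PosSemidef) ∧
    (∀ i j : Fin n, i ≠ j →
      star (ldoiBasis (fourierU n) (halfA n) i j) ⬝ᵥ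
          (fourierP n i j *ᵥ ldoiBasis (fourierU n) (halfA n) i j) =
        (n : ℂ) / (2 * (n : ℂ) - 2)) ∧
    ((1 / (n : ℝ) ^ 2) *
        ∑ i, ∑ j, (star (ldoiBasis (fourierU n) (halfA n) i j) ⬝ᵥ
          (fourierP n i j *ᵥ ldoiBasis (fourierU n) (halfA n) i j)).re = 1 / 2) ∧
    (∀ P : Fin n → Fin n → Matrix (Fin n × Fin n) (Fin n × Fin n) ℂ,
      (∀ i j, (P i j).PosSemidef) → (∑ i, ∑ j, P i j = 1) →
      (∀ i j, (ptranspose (P i j)).PosSemidef) →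
      (1 / (n : ℝ) ^ 2) *
          ∑ i, ∑ j, (star (ldoiBasis (fourierU n) (halfA n) i j) ⬝ᵥ
            (P i j *ᵥ ldoiBasis (fourierU n) (halfA n) i j)).re ≤ 1 / 2) := by
  refine ⟨fourierP_psd hn, fourierP_sum hn, ptP_psd hn,
    fun i j h => part4 hn h, part5 hn, part6 hn⟩
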